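/- For a word consisting of n repetitions of the pair [m,m] with m ≠ 0 (i.e., List.replicate (2n) m), EJ (List.replicate (2n) m) t = (1/2)^n · t^n / n! for all real t. -/

import Mathlib

open intervalIntegral

noncomputable def EJrev : List ℕ → ℝ → ℝ
  | [], _ => 1
  | [a], t => if a = 0 then ∫ s in (0:ℝ)..t, EJrev [] s else 0
  | a :: b :: rest, t =>
      if a = 0 then ∫ s in (0:ℝ)..t, EJrev (b :: rest) s
      else if b = a then (1/2) * ∫ s in (0:ℝ)..t, EJrev rest s
      else 0

/-- Expectation of the Stratonovich iterated integral `J_α(t)`, defined by the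
recursion on the last letter of the word. -/
noncomputable def EJ (α : List ℕ) (t : ℝ) : ℝ := EJrev α.reverse t

/-- A block is `[0]` or `[m,m]` with `m ≠ 0`. -/
def IsBlock (b : List ℕ) : Prop := b = [0] ∨ ∃ m : ℕ, m ≠ 0 ∧ b = [m, m]

/-- A word is admissible if it is a concatenation of blocks. -/
def Admissible (α : List ℕ) : Prop :=
  ∃ L : List (List ℕ), (∀ b ∈ L, IsBlock b) ∧ L.flatten = α

lemma EJrev_rep (m : ℕ) (hm : m ≠ 0) :
    ∀ (n : ℕ) (t : ℝ), EJrev (List.replicate (2 * n) m) t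
      = (1/2 : ℝ) ^ n * t ^ n / (Nat.factorial n) := by
  intro n
  induction n with
  | zero => intro t; simp [EJrev]
  | succ k ih =>
    intro t
    have h2 : 2 * (k + 1) = (2 * k + 1) + 1 := by ring
    rw [h2, List.replicate_succ, List.replicate_succ]
    rw [EJrev, if_neg hm, if_pos rfl]
    have : (∫ s in (0:ℝ)..t, EJrev (List.replicate (2 * k) m) s)
        = ∫ s in (0:ℝ)..t, (1/2 : ℝ) ^ k * s ^ k / (Nat.factorial k) := by
      congr 1; funext s; exact ih s
    rw [this]
    have : (∫ s in (0:ℝ)..t, (1/2 : ℝ) ^ k * s ^ k / (Nat.factorial k))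
        = ((1/2 : ℝ) ^ k / (Nat.factorial k)) * ∫ s in (0:ℝ)..t, s ^ k := by
      rw [← intervalIntegral.integral_const_mul]
      congr 1; funext s; ring
    rw [this, integral_pow]
    rw [Nat.factorial_succ]
    push_cast
    have hk : (Nat.factorial k : ℝ) ≠ 0 := Nat.cast_ne_zero.mpr (Nat.factorial_ne_zero k)
    have hk1 : (k : ℝ) + 1 ≠ 0 := by positivity
    rw [pow_succ]
    field_simp
    rw [zero_pow (M₀ := ℝ) (n := k + 1) (by omega)]
    ring

theorem stmt13 (n : ℕ) (m : ℕ) (hm : m ≠ 0) (t : ℝ) :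
    EJ (List.replicate (2 * n) m) t = (1/2 : ℝ) ^ n * t ^ n / (Nat.factorial n) := by
  rw [EJ, List.reverse_replicate]
  exact EJrev_rep m hm n t
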